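/- Let a, b be distinct points of the open unit disk 𝔹² ⊂ ℂ, and let u, v be points with |u| = |v| = 1 lying on the line through a and b, ordered so that u, a, b, v occur in this order on the line (i.e. a lies on the segment [u,b] and b lies on the segment [a,v]). Let m be the Euclidean distance from the origin to the line through a and b. Then sinh((1/2)·log((|u−b|·|a−v|)/(|u−a|·|b−v|))) = √(1−m²)·|a−b|/√((1−|a|²)(1−|b|²)). (That is, sinh(h(a,b)/2) = √(1−m²)·sinh(ρ(a,b)/2).) -/

import Mathlib

open Complex

set_option maxHeartbeats 1000000 in
/-- Theorem 3.3 (Hilbert vs hyperbolic in the unit disk):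
`sinh(h(a,b)/2) = √(1−m²)·sinh(ρ(a,b)/2)`, where `m` is the Euclidean distance from the
origin to the line through `a` and `b`, and `u, a, b, v` occur in this order on that line,
with `u, v` on the unit circle. -/
theorem stmt_6 (a b u v : ℂ) (ha : ‖a‖ < 1) (hb : ‖b‖ < 1) (hab : a ≠ b)
    (hu : ‖u‖ = 1) (hv : ‖v‖ = 1)
    (hua : a ∈ segment ℝ u b) (hbv : b ∈ segment ℝ a v) :
    Real.sinh ((1 / 2) *
        Real.log ((‖u - b‖ * ‖a - v‖) /
          (‖u - a‖ * ‖b - v‖))) =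
      Real.sqrt (1 - (Metric.infDist (0 : ℂ) {z : ℂ | ∃ t : ℝ, z = a + t • (b - a)})^2) *
        (‖a - b‖ /
          Real.sqrt ((1 - (‖a‖)^2) * (1 - (‖b‖)^2))) := by
  
  have hdne : b - a ≠ 0 := sub_ne_zero.mpr (Ne.symm hab)
  set d : ℂ := b - a with hd
  set L : ℝ := ‖d‖ with hLdef
  have hL : 0 < L := by simpa [hLdef] using (norm_pos_iff.mpr hdne)
  set I : ℝ := a.re * d.re + a.im * d.im with hI
  have key : ∀ t : ℝ, (‖a + t • d‖)^2
      = (‖a‖)^2 + 2*t*I + t^2*L^2 := by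
    intro t
    rw [Complex.sq_norm, Complex.sq_norm, hLdef, Complex.sq_norm]
    simp [Complex.normSq_apply, Complex.add_re, Complex.add_im, Complex.real_smul,
      Complex.mul_re, Complex.mul_im, hI]
    ring
  -- parametrize u
  obtain ⟨s1, s2, hs1, hs2, hsum, heq⟩ := hua
  have hs1ne : s1 ≠ 0 := by
    rintro rfl
    simp at hsum
    rw [hsum] at heq
    simp at heq
    exact hab heq.symm
  have hs2ne : s2 ≠ 0 := by
    rintro rfl
    simp at hsum
    rw [hsum] at heq
    simp at heq
    rw [← heq] at ha
    exact absurd hu (by linarith)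
  have hs1p : 0 < s1 := lt_of_le_of_ne hs1 (Ne.symm hs1ne)
  have hs2p : 0 < s2 := lt_of_le_of_ne hs2 (Ne.symm hs2ne)
  set p : ℝ := s2 / s1 with hpdef
  have hp : 0 < p := div_pos hs2p hs1p
  have hu_eq : u = a + (-p) • d := by
    have hC : (s1:ℂ) * u + (s2:ℂ) * b = a := by
      simpa [Complex.real_smul] using heq
    have hsC : (s1:ℂ) + (s2:ℂ) = 1 := by exact_mod_cast hsum
    have hs1C : (s1:ℂ) ≠ 0 := by exact_mod_cast hs1ne
    rw [Complex.real_smul, hd, hpdef]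
    push_cast
    field_simp
    linear_combination hC - b * hsC - (a - b) * hsC
  -- parametrize v
  obtain ⟨r1, r2, hr1, hr2, hrsum, hreq⟩ := hbv
  have hr2ne : r2 ≠ 0 := by
    rintro rfl
    simp at hrsum
    rw [hrsum] at hreq
    simp at hreq
    exact hab hreq
  have hr2p : 0 < r2 := lt_of_le_of_ne hr2 (Ne.symm hr2ne)
  have hr2lt : r2 < 1 := by
    rcases lt_or_eq_of_le (by linarith : r2 ≤ 1) with h | h
    · exact h
    · exfalso
      have : r1 = 0 := by linarith
      rw [this, h] at hreq
      simp at hreq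
      rw [hreq] at hv
      linarith
  set q : ℝ := 1 / r2 - 1 with hqdef
  have hq : 0 < q := by
    rw [hqdef]
    have : 1 < 1 / r2 := (one_lt_div hr2p).mpr hr2lt
    linarith
  have h1q : 1 + q = 1 / r2 := by rw [hqdef]; ring
  have hv_eq : v = a + (1 + q) • d := by
    have hC : (r1:ℂ) * a + (r2:ℂ) * v = b := by
      simpa [Complex.real_smul] using hreq
    have hsC : (r1:ℂ) + (r2:ℂ) = 1 := by exact_mod_cast hrsum
    have hr2C : (r2:ℂ) ≠ 0 := by exact_mod_cast hr2ne
    rw [Complex.real_smul, hd, h1q]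
    push_cast
    field_simp
    linear_combination hC - a * hsC
  -- the three circle/point equations
  have Eu : (1:ℝ) = (‖a‖)^2 + 2*(-p)*I + (-p)^2*L^2 := by
    have := key (-p)
    rw [← hu_eq] at this
    rw [← this, hu]
    norm_num
  have Ev : (1:ℝ) = (‖a‖)^2 + 2*(1+q)*I + (1+q)^2*L^2 := by
    have := key (1 + q)
    rw [← hv_eq] at this
    rw [← this, hv]
    norm_num
  have Eb : (‖b‖)^2 = (‖a‖)^2 + 2*I + L^2 := by
    have := key 1
    simp only [one_smul] at this
    rw [hd] at this
    simpa using this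
  have hpq : (0:ℝ) < 1 + q + p := by linarith
  clear_value d L I p q
  have hIval : I = (p - 1 - q) * L^2 / 2 := by
    have h2I : (1 + q + p) * (2*I - (p - 1 - q)*L^2) = 0 := by linear_combination Eu - Ev
    have h3 := (mul_eq_zero.mp h2I).resolve_left (ne_of_gt hpq)
    linarith
  have hA : 1 - (‖a‖)^2 = p*(1+q)*L^2 := by
    linear_combination Eu - 2*p*hIval
  have hB : 1 - (‖b‖)^2 = q*(1+p)*L^2 := by
    linear_combination Eu - Eb - (2*p+2)*hIval
  -- infDist computation
  set S : Set ℂ := {z : ℂ | ∃ t : ℝ, z = a + t • d} with hS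
  set M : ℝ := ‖a + (-I/L^2) • d‖ with hM
  have hM2 : M^2 = (‖a‖)^2 - I^2/L^2 := by
    rw [hM, key]
    field_simp
    ring
  have hm : Metric.infDist (0 : ℂ) S = M := by
    apply le_antisymm
    · have hmem : a + (-I/L^2) • d ∈ S := ⟨-I/L^2, rfl⟩
      calc Metric.infDist (0 : ℂ) S ≤ dist 0 (a + (-I/L^2) • d) :=
            Metric.infDist_le_dist_of_mem hmem
        _ = M := by rw [dist_zero_left, hM]
    · by_contra hcon
      push_neg at hcon
      obtain ⟨z, hz, hzlt⟩ := (Metric.infDist_lt_iff (⟨a, ⟨0, by simp⟩⟩ : S.Nonempty)).mp hcon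
      obtain ⟨t, rfl⟩ := hz
      rw [dist_zero_left] at hzlt
      revert hzlt
      rw [imp_false, not_lt]
      have h1 : M^2 ≤ (‖a + t • d‖)^2 := by
        rw [hM2, key]
        have e : ‖a‖ ^ 2 + 2 * t * I + t ^ 2 * L ^ 2
            - (‖a‖ ^ 2 - I ^ 2 / L ^ 2) = (t*L^2 + I)^2/L^2 := by
          field_simp
          ring
        nlinarith [div_nonneg (sq_nonneg (t*L^2 + I)) (sq_nonneg L)]
      have hMnn : 0 ≤ M := norm_nonneg _
      exact (pow_le_pow_iff_left₀ hMnn (norm_nonneg _) two_ne_zero).mp h1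
  have hI2 : I^2 = ((p-1-q)*L^2/2)^2 := by rw [hIval]
  have h1m : 1 - M^2 = (L*(1+q+p)/2)^2 := by
    rw [hM2]
    field_simp
    linear_combination (4*L^2)*hA + 4*hI2
  -- distances
  have hub : ‖u - b‖ = (1+p)*L := by
    have e : u - b = ((-p-1 : ℝ)) • d := by
      rw [hu_eq, hd, Complex.real_smul, Complex.real_smul]
      push_cast
      ring
    rw [e, Complex.real_smul, norm_mul, Complex.norm_real, Real.norm_eq_abs, abs_of_neg (by linarith : (-p-1:ℝ) < 0)]
    rw [← hLdef]
    ring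
  have hav : ‖a - v‖ = (1+q)*L := by
    have e : a - v = ((-(1+q) : ℝ)) • d := by
      rw [hv_eq, hd, Complex.real_smul, Complex.real_smul]
      push_cast
      ring
    rw [e, Complex.real_smul, norm_mul, Complex.norm_real, Real.norm_eq_abs, abs_of_neg (by linarith : (-(1+q):ℝ) < 0)]
    rw [← hLdef]
    ring
  have hua' : ‖u - a‖ = p*L := by
    have e : u - a = ((-p : ℝ)) • d := by
      rw [hu_eq]
      ring
    rw [e, Complex.real_smul, norm_mul, Complex.norm_real, Real.norm_eq_abs, abs_of_neg (by linarith : (-p:ℝ) < 0)]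
    rw [← hLdef]
    ring
  have hbv' : ‖b - v‖ = q*L := by
    have e : b - v = ((-q : ℝ)) • d := by
      rw [hv_eq, hd, Complex.real_smul, Complex.real_smul]
      push_cast
      ring
    rw [e, Complex.real_smul, norm_mul, Complex.norm_real, Real.norm_eq_abs, abs_of_neg (by linarith : (-q:ℝ) < 0)]
    rw [← hLdef]
    ring
  have habL : ‖a - b‖ = L := by
    rw [hLdef, hd, ← norm_neg (a - b)]
    ring_nf
  rw [hub, hav, hua', hbv', habL, hm, h1m, hA, hB]
  rw [Real.sqrt_sq (by positivity : (0:ℝ) ≤ L*(1+q+p)/2)]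
  -- the scalar identity
  set Y : ℝ := Real.sqrt (p*q*(1+p)*(1+q)) with hYdef
  have hY2 : Y^2 = p*q*(1+p)*(1+q) := Real.sq_sqrt (by positivity)
  have hYpos : 0 < Y := Real.sqrt_pos.mpr (by positivity)
  have hprod : p*(1+q)*L^2 * (q*(1+p)*L^2) = (L^2*Y)^2 := by
    have : (L^2*Y)^2 = L^4 * Y^2 := by ring
    rw [this, hY2]
    ring
  rw [hprod, Real.sqrt_sq (by positivity : (0:ℝ) ≤ L^2*Y)]
  have hX : (1+p)*L*((1+q)*L)/(p*L*(q*L)) = (1+p)*(1+q)/(p*q) := by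
    field_simp
  rw [hX]
  have hXpos : (0:ℝ) < (1+p)*(1+q)/(p*q) := by positivity
  have hsX : Real.sqrt ((1+p)*(1+q)/(p*q)) = (1+p)*(1+q)/Y := by
    rw [show (1+p)*(1+q)/(p*q) = ((1+p)*(1+q)/Y)^2 by
      field_simp
      linear_combination hY2]
    exact Real.sqrt_sq (by positivity)
  have hexp : Real.exp (1/2 * Real.log ((1+p)*(1+q)/(p*q))) = (1+p)*(1+q)/Y := by
    rw [show (1:ℝ)/2 * Real.log ((1+p)*(1+q)/(p*q))
        = Real.log (Real.sqrt ((1+p)*(1+q)/(p*q))) by rw [Real.log_sqrt hXpos.le]; ring]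
    rw [Real.exp_log (Real.sqrt_pos.mpr hXpos), hsX]
  rw [Real.sinh_eq, Real.exp_neg, hexp]
  field_simp
  linear_combination (-1) * hY2
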